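/- Let C be a nodal curve and Z, Z' tails of C with k_Z = k_{Z'} = 3 such that the pair (Z, Z') is not perfect and Term_Z ∩ Term_{Z'} = {S} for a single node S. Suppose Z ∪ Z' crosses S (i.e., both components through S lie in Z ∪ Z'). Then Z ∪ Z' and Z ∧ Z' are 2-tails of C, with Term_{Z∪Z'} = (Term_Z ∪ Term_{Z'}) ∖ ({S} ∪ Term_{Z∧Z'}) consisting of one terminal point of Z and one of Z', and Term_{Z∧Z'} consisting of the remaining terminal point of Z and of Z'. -/

import Mathlib

open Finset

/-- A combinatorial model of a nodal curve: `V` is the set of irreducible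
components, `N` the set of nodes, `ends e` the (one or two) components through
the node `e`, `gen v` the geometric genus of the component `v`, and `base` the
component containing the marked smooth point `σ(0)`. -/
structure NodalGraph where
  V : Type
  N : Type
  [fV : Fintype V]
  [dV : DecidableEq V]
  [fN : Fintype N]
  [dN : DecidableEq N]
  ends : N → V × V
  gen : V → ℕ
  base : V

attribute [instance] NodalGraph.fV NodalGraph.dV NodalGraph.fN NodalGraph.dN

namespace NodalGraph

variable (G : NodalGraph)

/-- Two components are adjacent if some node lies on both. -/
def Adj (a b : G.V) : Prop := ∃ e, G.ends e = (a, b) ∨ G.ends e = (b, a)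

/-- The set of terminal points of a subcurve `Z`, i.e. the nodes in `Z ∩ Zᶜ`. -/
def Term (Z : Finset G.V) : Finset G.N :=
  univ.filter (fun e =>
    ((G.ends e).1 ∈ Z ∧ (G.ends e).2 ∉ Z) ∨ ((G.ends e).1 ∉ Z ∧ (G.ends e).2 ∈ Z))

/-- `k_Z`, the number of terminal points of `Z`. -/
def k (Z : Finset G.V) : ℕ := (G.Term Z).card

/-- A (nonempty) subcurve is connected. -/
def ConnSub (Z : Finset G.V) : Prop :=
  Z.Nonempty ∧ ∀ u ∈ Z, ∀ v ∈ Z,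
    Relation.ReflTransGen (fun a b => a ∈ Z ∧ b ∈ Z ∧ G.Adj a b) u v

/-- The whole curve is connected. -/
def Connected : Prop := G.ConnSub univ

/-- A tail: a proper subcurve `Z` with both `Z` and `Zᶜ` connected. -/
def IsTail (Z : Finset G.V) : Prop := Z ≠ univ ∧ G.ConnSub Z ∧ G.ConnSub Zᶜ

/-- A `m`-tail: a tail with `k_Z = m`. -/
def IsKTail (Z : Finset G.V) (m : ℕ) : Prop := G.IsTail Z ∧ G.k Z = m

/-- The node `e` lies on the component `v`. -/
def onComp (e : G.N) (v : G.V) : Prop := (G.ends e).1 = v ∨ (G.ends e).2 = v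

/-- The node `e`, as a point of the curve, lies on the subcurve `Z`. -/
def nodeOn (e : G.N) (Z : Finset G.V) : Prop := (G.ends e).1 ∈ Z ∨ (G.ends e).2 ∈ Z

/-- The subcurve `Z` crosses the node `e`: both branches of `e` lie in `Z`. -/
def crosses (Z : Finset G.V) (e : G.N) : Prop := (G.ends e).1 ∈ Z ∧ (G.ends e).2 ∈ Z

/-- `Z ≺ Z'`: strict inclusion with disjoint terminal points. -/
def prec (Z Z' : Finset G.V) : Prop := Z ⊂ Z' ∧ G.Term Z ∩ G.Term Z' = ∅

/-- The pair `(Z, Z')` is free: disjoint terminal points. -/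
def free (Z Z' : Finset G.V) : Prop := G.Term Z ∩ G.Term Z' = ∅

/-- The pair `(Z, Z')` is perfect. -/
def perfect (Z Z' : Finset G.V) : Prop := Z ⊆ Z' ∨ Z' ⊆ Z ∨ Zᶜ ⊆ Z' ∨ Z' ⊆ Zᶜ

/-- `T¹_γ`: the nested set of 1-tails containing `C_γ` and avoiding `σ(0)`. -/
def T1 (γ : G.V) : Set (Finset G.V) := { Z | G.IsKTail Z 1 ∧ γ ∈ Z ∧ G.base ∉ Z }

/-- The defining condition for the 2-tails entering `T²_{γ,γ'}`. -/
def cond2 (γ γ' : G.V) (Z : Finset G.V) : Prop :=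
  G.IsKTail Z 2 ∧ γ ∈ Z ∧ γ' ∈ Z ∧ G.base ∉ Z

/-- `W 0 ≺ W 1 ≺ ⋯ ≺ W (M-1)` is the nested set `T²_{γ,γ'}` of 2-tails:
each `W t` is minimal among the 2-tails `Z ⊇ C_γ ∪ C_γ'` with `σ(0) ∈ Zᶜ`
and `W (t-1) ≺ Z` (starting from `W_{-1} = ∅`), and the chain is maximal. -/
def IsNested2 (γ γ' : G.V) (M : ℕ) (W : ℕ → Finset G.V) : Prop :=
  (∀ t < M, Minimal (fun Z => G.cond2 γ γ' Z ∧ G.prec (if t = 0 then ∅ else W (t - 1)) Z) (W t)) ∧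
  ¬ ∃ Z, G.cond2 γ γ' Z ∧ G.prec (if M = 0 then ∅ else W (M - 1)) Z

/-- The set underlying a finite chain `W 0, …, W (M-1)`. -/
def chainSet (M : ℕ) (W : ℕ → Finset G.V) : Set (Finset G.V) := { Z | ∃ t < M, W t = Z }

/-- The defining condition for the 3-tails entering `T³_{γ,γ'}`:
3-tails that are moreover free with respect to every member of `T²_{γ,γ'}`. -/
def cond3 (γ γ' : G.V) (T2 : Set (Finset G.V)) (Z : Finset G.V) : Prop :=
  G.IsKTail Z 3 ∧ γ ∈ Z ∧ γ' ∈ Z ∧ G.base ∉ Z ∧ ∀ W ∈ T2, G.free Z W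

/-- `W 0 ≺ ⋯ ≺ W (M-1)` is the nested set `T³_{γ,γ'}` of 3-tails (relative to
the set `T2` of nested 2-tails). -/
def IsNested3 (γ γ' : G.V) (T2 : Set (Finset G.V)) (M : ℕ) (W : ℕ → Finset G.V) : Prop :=
  (∀ t < M, Minimal (fun Z => G.cond3 γ γ' T2 Z ∧ G.prec (if t = 0 then ∅ else W (t - 1)) Z) (W t)) ∧
  ¬ ∃ Z, G.cond3 γ γ' T2 Z ∧ G.prec (if M = 0 then ∅ else W (M - 1)) Z

end NodalGraph

section Aux

namespace NodalGraph

variable {G : NodalGraph}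

private lemma adj_symm {a b : G.V} (h : G.Adj a b) : G.Adj b a := by
  obtain ⟨e, h⟩ := h; exact ⟨e, h.symm⟩

private lemma path_mono {X Y : Finset G.V} (h : X ⊆ Y) {u v : G.V}
    (hp : Relation.ReflTransGen (fun a b => a ∈ X ∧ b ∈ X ∧ G.Adj a b) u v) :
    Relation.ReflTransGen (fun a b => a ∈ Y ∧ b ∈ Y ∧ G.Adj a b) u v :=
  Relation.ReflTransGen.mono (fun _ _ hab => ⟨h hab.1, h hab.2.1, hab.2.2⟩) _ _ hp

private lemma mem_Term {Z : Finset G.V} {e : G.N} :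
    e ∈ G.Term Z ↔ (((G.ends e).1 ∈ Z ∧ (G.ends e).2 ∉ Z) ∨
      ((G.ends e).1 ∉ Z ∧ (G.ends e).2 ∈ Z)) := by
  simp [NodalGraph.Term]

/-- The set of nodes with one branch in `X` and the other in `Y`. -/
private def tset (G : NodalGraph) (X Y : Finset G.V) : Finset G.N :=
  Finset.univ.filter (fun e =>
    ((G.ends e).1 ∈ X ∧ (G.ends e).2 ∈ Y) ∨ ((G.ends e).2 ∈ X ∧ (G.ends e).1 ∈ Y))

private lemma mem_tset {X Y : Finset G.V} {e : G.N} :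
    e ∈ G.tset X Y ↔ (((G.ends e).1 ∈ X ∧ (G.ends e).2 ∈ Y) ∨
      ((G.ends e).2 ∈ X ∧ (G.ends e).1 ∈ Y)) := by
  simp [NodalGraph.tset]

/-- In a connected subcurve `W`, any nonempty proper `Y ⊆ W` has a boundary
edge inside `W`. -/
private lemma exists_boundary {W Y : Finset G.V}
    (hW : G.ConnSub W) (hYW : Y ⊆ W) (hY : Y.Nonempty) (hne : ∃ v ∈ W, v ∉ Y) :
    ∃ e, ((G.ends e).1 ∈ Y ∧ (G.ends e).2 ∈ W ∧ (G.ends e).2 ∉ Y) ∨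
         ((G.ends e).2 ∈ Y ∧ (G.ends e).1 ∈ W ∧ (G.ends e).1 ∉ Y) := by
  obtain ⟨u, hu⟩ := hY
  obtain ⟨v, hvW, hvY⟩ := hne
  have hp := hW.2 u (hYW hu) v hvW
  suffices h : ∀ b, Relation.ReflTransGen (fun a b => a ∈ W ∧ b ∈ W ∧ G.Adj a b) u b →
      b ∈ Y ∨ ∃ e, ((G.ends e).1 ∈ Y ∧ (G.ends e).2 ∈ W ∧ (G.ends e).2 ∉ Y) ∨
         ((G.ends e).2 ∈ Y ∧ (G.ends e).1 ∈ W ∧ (G.ends e).1 ∉ Y) by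
    rcases h v hp with h | h
    · exact absurd h hvY
    · exact h
  intro b hb
  induction hb with
  | refl => exact Or.inl hu
  | @tail c b _ hcb ih =>
      rcases ih with hcY | he
      · by_cases hbY : b ∈ Y
        · exact Or.inl hbY
        · obtain ⟨e, he⟩ := hcb.2.2
          refine Or.inr ⟨e, ?_⟩
          rcases he with he | he
          · exact Or.inl ⟨by rw [he]; exact hcY, by rw [he]; exact hcb.2.1,
              by rw [he]; exact hbY⟩
          · exact Or.inr ⟨by rw [he]; exact hcY, by rw [he]; exact hcb.2.1,
              by rw [he]; exact hbY⟩
      · exact Or.inr he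

private lemma connSub_union {X Y : Finset G.V}
    (hX : G.ConnSub X) (hY : G.ConnSub Y) (h : (X ∩ Y).Nonempty) :
    G.ConnSub (X ∪ Y) := by
  obtain ⟨w, hw⟩ := h
  rw [Finset.mem_inter] at hw
  have hsymm : Symmetric (fun a b => a ∈ X ∪ Y ∧ b ∈ X ∪ Y ∧ G.Adj a b) :=
    fun a b hab => ⟨hab.2.1, hab.1, adj_symm hab.2.2⟩
  have reach : ∀ u ∈ X ∪ Y,
      Relation.ReflTransGen (fun a b => a ∈ X ∪ Y ∧ b ∈ X ∪ Y ∧ G.Adj a b) u w := by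
    intro u hu
    rcases Finset.mem_union.mp hu with h' | h'
    · exact path_mono Finset.subset_union_left (hX.2 u h' w hw.1)
    · exact path_mono Finset.subset_union_right (hY.2 u h' w hw.2)
  refine ⟨⟨w, Finset.mem_union_left _ hw.1⟩, fun u hu v hv => ?_⟩
  exact (reach u hu).trans ((@Relation.ReflTransGen.stdSymm _ _ ⟨fun _ _ h => hsymm h⟩).symm _ _ (reach v hv))

/-- If every boundary edge of `D` inside a connected `W ⊇ D` is a single node
`e0`, then `D` is connected. -/
private lemma connSub_of_unique_boundary {W D : Finset G.V}
    (hW : G.ConnSub W) (hDW : D ⊆ W) (hDne : D.Nonempty) (e0 : G.N)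
    (hbd : ∀ e, (((G.ends e).1 ∈ D ∧ (G.ends e).2 ∈ W ∧ (G.ends e).2 ∉ D) ∨
                 ((G.ends e).2 ∈ D ∧ (G.ends e).1 ∈ W ∧ (G.ends e).1 ∉ D)) →
            e = e0) :
    G.ConnSub D := by
  classical
  refine ⟨hDne, fun u hu v hv => ?_⟩
  by_contra hcon
  set r := fun a b => a ∈ D ∧ b ∈ D ∧ G.Adj a b with hr
  set P := D.filter (fun x => Relation.ReflTransGen r u x) with hP
  have hPD : P ⊆ D := Finset.filter_subset _ _
  have huP : u ∈ P := Finset.mem_filter.mpr ⟨hu, Relation.ReflTransGen.refl⟩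
  have hvP : v ∉ P := fun h => hcon (Finset.mem_filter.mp h).2
  have hQD : D \ P ⊆ D := Finset.sdiff_subset
  have hstep : ∀ a ∈ P, ∀ b ∈ D, G.Adj a b → b ∈ P := by
    intro a ha b hb hab
    obtain ⟨haD, har⟩ := Finset.mem_filter.mp ha
    exact Finset.mem_filter.mpr ⟨hb, har.tail ⟨haD, hb, hab⟩⟩
  -- a general claim applied to both `P` and `D \ P`
  have claim : ∀ P' : Finset G.V, P' ⊆ D → P'.Nonempty → (∃ x ∈ W, x ∉ P') →
      (∀ a ∈ P', ∀ b ∈ D, G.Adj a b → b ∈ P') →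
      (((G.ends e0).1 ∈ P' ∧ (G.ends e0).2 ∉ D) ∨
       ((G.ends e0).2 ∈ P' ∧ (G.ends e0).1 ∉ D)) := by
    intro P' hP'D hP'ne hP'pr hcl
    obtain ⟨e, he⟩ := exists_boundary hW (hP'D.trans hDW) hP'ne hP'pr
    rcases he with ⟨h1, h2, h3⟩ | ⟨h1, h2, h3⟩
    · have hnd : (G.ends e).2 ∉ D := by
        intro hd
        exact h3 (hcl _ h1 _ hd ⟨e, Or.inl rfl⟩)
      have := hbd e (Or.inl ⟨hP'D h1, h2, fun h => hnd h⟩)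
      subst this
      exact Or.inl ⟨h1, hnd⟩
    · have hnd : (G.ends e).1 ∉ D := by
        intro hd
        exact h3 (hcl _ h1 _ hd ⟨e, Or.inr rfl⟩)
      have := hbd e (Or.inr ⟨hP'D h1, h2, fun h => hnd h⟩)
      subst this
      exact Or.inr ⟨h1, hnd⟩
  have hcl2 : ∀ a ∈ D \ P, ∀ b ∈ D, G.Adj a b → b ∈ D \ P := by
    intro a ha b hb hab
    rw [Finset.mem_sdiff] at ha ⊢
    refine ⟨hb, fun hbP => ha.2 (hstep b hbP a ha.1 (adj_symm hab))⟩
  have c1 := claim P hPD ⟨u, huP⟩ ⟨v, hDW hv, hvP⟩ hstep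
  have c2 := claim (D \ P) hQD ⟨v, Finset.mem_sdiff.mpr ⟨hv, hvP⟩⟩
      ⟨u, hDW hu, fun h => (Finset.mem_sdiff.mp h).2 huP⟩ hcl2
  rcases c1 with ⟨h1, h2⟩ | ⟨h1, h2⟩ <;> rcases c2 with ⟨h3, h4⟩ | ⟨h3, h4⟩
  · exact (Finset.mem_sdiff.mp h3).2 h1
  · exact h4 (hPD h1)
  · exact h2 (hQD h3)
  · exact (Finset.mem_sdiff.mp h3).2 h1

end NodalGraph

end Aux

set_option maxHeartbeats 8000000 in
/-- from the proof of Theorem 3.6: two 3-tails `Z, Z'` whose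
pair is not perfect, with `Term_Z ∩ Term_{Z'} = {S}` and `Z ∪ Z'` crossing `S`,
have `Z ∪ Z'` and `Z ∧ Z'` 2-tails with the stated terminal points. -/
theorem union_and_wedge_of_three_tails
    (G : NodalGraph) (hconn : G.Connected) (Z Z' : Finset G.V) (S : G.N)
    (hZ : G.IsKTail Z 3) (hZ' : G.IsKTail Z' 3)
    (hnp : ¬ G.perfect Z Z')
    (hTT : G.Term Z ∩ G.Term Z' = {S})
    (hcross : G.crosses (Z ∪ Z') S) :
    G.IsKTail (Z ∪ Z') 2 ∧ G.IsKTail (Z ∩ Z') 2 ∧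
    G.Term (Z ∪ Z') = (G.Term Z ∪ G.Term Z') \ ({S} ∪ G.Term (Z ∩ Z')) ∧
    (∃ U₁ ∈ G.Term Z, ∃ U₂ ∈ G.Term Z', U₁ ≠ U₂ ∧ G.Term (Z ∪ Z') = {U₁, U₂}) ∧
    (∃ U₁' ∈ G.Term Z, ∃ U₂' ∈ G.Term Z', U₁' ≠ U₂' ∧ G.Term (Z ∩ Z') = {U₁', U₂'}) := by
  classical
  obtain ⟨⟨hZu, hZc, hZcc⟩, hkZ⟩ := hZ
  obtain ⟨⟨hZ'u, hZ'c, hZ'cc⟩, hkZ'⟩ := hZ'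
  simp only [NodalGraph.perfect, not_or] at hnp
  obtain ⟨hnp1, hnp2, hnp3, hnp4⟩ := hnp
  have hAne : (Z \ Z').Nonempty := Finset.sdiff_nonempty.mpr hnp1
  have hBne : (Z' \ Z).Nonempty := Finset.sdiff_nonempty.mpr hnp2
  have hIne : (Z ∩ Z').Nonempty := by
    obtain ⟨x, hx1, hx2⟩ := Finset.not_subset.mp hnp4
    exact ⟨x, Finset.mem_inter.mpr ⟨by simpa using hx2, hx1⟩⟩
  have hOne : ((Z ∪ Z')ᶜ).Nonempty := by
    obtain ⟨x, hx1, hx2⟩ := Finset.not_subset.mp hnp3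
    refine ⟨x, ?_⟩
    rw [Finset.mem_compl] at hx1 ⊢
    rw [Finset.mem_union]
    exact fun h => h.elim hx1 hx2
  -- S is a node between `Z \ Z'` and `Z' \ Z`
  have hS : S ∈ G.tset (Z \ Z') (Z' \ Z) := by
    have hS1 : S ∈ G.Term Z ∧ S ∈ G.Term Z' := by
      have h := Finset.mem_singleton_self S
      rw [← hTT, Finset.mem_inter] at h; exact h
    obtain ⟨hSZ, hSZ'⟩ := hS1
    rw [NodalGraph.mem_Term] at hSZ hSZ'
    have hcr := hcross
    unfold NodalGraph.crosses at hcr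
    obtain ⟨h1, h2⟩ := hcr
    rw [Finset.mem_union] at h1 h2
    rw [NodalGraph.mem_tset]
    simp only [Finset.mem_sdiff]
    tauto
  -- characterizations of Term sets in terms of the four regions
  have hTermZ : G.Term Z = G.tset (Z ∩ Z') (Z' \ Z) ∪ G.tset (Z ∩ Z') (Z ∪ Z')ᶜ ∪
      G.tset (Z \ Z') (Z' \ Z) ∪ G.tset (Z \ Z') (Z ∪ Z')ᶜ := by
    ext e
    simp only [NodalGraph.mem_Term, NodalGraph.mem_tset, Finset.mem_union,
      Finset.mem_inter, Finset.mem_sdiff, Finset.mem_compl]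
    by_cases h1 : (G.ends e).1 ∈ Z <;> by_cases h2 : (G.ends e).1 ∈ Z' <;>
      by_cases h3 : (G.ends e).2 ∈ Z <;> by_cases h4 : (G.ends e).2 ∈ Z' <;>
      simp [h1, h2, h3, h4]
  have hTermZ' : G.Term Z' = G.tset (Z ∩ Z') (Z \ Z') ∪ G.tset (Z ∩ Z') (Z ∪ Z')ᶜ ∪
      G.tset (Z \ Z') (Z' \ Z) ∪ G.tset (Z' \ Z) (Z ∪ Z')ᶜ := by
    ext e
    simp only [NodalGraph.mem_Term, NodalGraph.mem_tset, Finset.mem_union,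
      Finset.mem_inter, Finset.mem_sdiff, Finset.mem_compl]
    by_cases h1 : (G.ends e).1 ∈ Z <;> by_cases h2 : (G.ends e).1 ∈ Z' <;>
      by_cases h3 : (G.ends e).2 ∈ Z <;> by_cases h4 : (G.ends e).2 ∈ Z' <;>
      simp [h1, h2, h3, h4]
  have hTermU : G.Term (Z ∪ Z') = G.tset (Z ∩ Z') (Z ∪ Z')ᶜ ∪
      G.tset (Z \ Z') (Z ∪ Z')ᶜ ∪ G.tset (Z' \ Z) (Z ∪ Z')ᶜ := by
    ext e
    simp only [NodalGraph.mem_Term, NodalGraph.mem_tset, Finset.mem_union,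
      Finset.mem_inter, Finset.mem_sdiff, Finset.mem_compl]
    by_cases h1 : (G.ends e).1 ∈ Z <;> by_cases h2 : (G.ends e).1 ∈ Z' <;>
      by_cases h3 : (G.ends e).2 ∈ Z <;> by_cases h4 : (G.ends e).2 ∈ Z' <;>
      simp [h1, h2, h3, h4]
  have hTermI : G.Term (Z ∩ Z') = G.tset (Z ∩ Z') (Z \ Z') ∪
      G.tset (Z ∩ Z') (Z' \ Z) ∪ G.tset (Z ∩ Z') (Z ∪ Z')ᶜ := by
    ext e
    simp only [NodalGraph.mem_Term, NodalGraph.mem_tset, Finset.mem_union,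
      Finset.mem_inter, Finset.mem_sdiff, Finset.mem_compl]
    by_cases h1 : (G.ends e).1 ∈ Z <;> by_cases h2 : (G.ends e).1 ∈ Z' <;>
      by_cases h3 : (G.ends e).2 ∈ Z <;> by_cases h4 : (G.ends e).2 ∈ Z' <;>
      simp [h1, h2, h3, h4]
  have hTT' : G.tset (Z ∩ Z') (Z ∪ Z')ᶜ ∪ G.tset (Z \ Z') (Z' \ Z) = {S} := by
    rw [← hTT]
    ext e
    simp only [NodalGraph.mem_Term, NodalGraph.mem_tset, Finset.mem_union,
      Finset.mem_inter, Finset.mem_sdiff, Finset.mem_compl]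
    by_cases h1 : (G.ends e).1 ∈ Z <;> by_cases h2 : (G.ends e).1 ∈ Z' <;>
      by_cases h3 : (G.ends e).2 ∈ Z <;> by_cases h4 : (G.ends e).2 ∈ Z' <;>
      simp [h1, h2, h3, h4]
  have hSnIO : S ∉ G.tset (Z ∩ Z') (Z ∪ Z')ᶜ := by
    intro h
    rw [NodalGraph.mem_tset] at h hS
    simp only [Finset.mem_inter, Finset.mem_sdiff, Finset.mem_compl,
      Finset.mem_union] at h hS
    tauto
  have htIO : G.tset (Z ∩ Z') (Z ∪ Z')ᶜ = ∅ := by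
    rw [Finset.eq_empty_iff_forall_notMem]
    intro e he
    have h : e ∈ ({S} : Finset G.N) := hTT' ▸ Finset.mem_union_left _ he
    rw [Finset.mem_singleton] at h
    exact hSnIO (h ▸ he)
  have htAB : G.tset (Z \ Z') (Z' \ Z) = {S} := by
    apply Finset.Subset.antisymm
    · intro e he
      exact hTT' ▸ Finset.mem_union_right _ he
    · intro e he; rw [Finset.mem_singleton] at he; subst he; exact hS
  -- nonemptiness of the four boundary classes
  have htIAne : (G.tset (Z ∩ Z') (Z \ Z')).Nonempty := by
    obtain ⟨i, hi⟩ := hIne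
    rw [Finset.mem_inter] at hi
    obtain ⟨e, he⟩ := NodalGraph.exists_boundary hZc Finset.sdiff_subset hAne
        ⟨i, hi.1, fun h => (Finset.mem_sdiff.mp h).2 hi.2⟩
    refine ⟨e, ?_⟩
    rw [NodalGraph.mem_tset]
    simp only [Finset.mem_inter, Finset.mem_sdiff] at he ⊢
    tauto
  have htIBne : (G.tset (Z ∩ Z') (Z' \ Z)).Nonempty := by
    obtain ⟨i, hi⟩ := hIne
    rw [Finset.mem_inter] at hi
    obtain ⟨e, he⟩ := NodalGraph.exists_boundary hZ'c Finset.sdiff_subset hBne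
        ⟨i, hi.2, fun h => (Finset.mem_sdiff.mp h).2 hi.1⟩
    refine ⟨e, ?_⟩
    rw [NodalGraph.mem_tset]
    simp only [Finset.mem_inter, Finset.mem_sdiff] at he ⊢
    tauto
  have htAOne : (G.tset (Z \ Z') (Z ∪ Z')ᶜ).Nonempty := by
    obtain ⟨o, ho⟩ := hOne
    rw [Finset.mem_compl, Finset.mem_union] at ho
    push_neg at ho
    have hAsub : Z \ Z' ⊆ Z'ᶜ := by
      intro a ha
      rw [Finset.mem_compl]
      exact (Finset.mem_sdiff.mp ha).2
    obtain ⟨e, he⟩ := NodalGraph.exists_boundary hZ'cc hAsub hAne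
        ⟨o, Finset.mem_compl.mpr ho.2, fun h => ho.1 (Finset.mem_sdiff.mp h).1⟩
    refine ⟨e, ?_⟩
    rw [NodalGraph.mem_tset]
    simp only [Finset.mem_sdiff, Finset.mem_compl, Finset.mem_union] at he ⊢
    tauto
  have htBOne : (G.tset (Z' \ Z) (Z ∪ Z')ᶜ).Nonempty := by
    obtain ⟨o, ho⟩ := hOne
    rw [Finset.mem_compl, Finset.mem_union] at ho
    push_neg at ho
    have hBsub : Z' \ Z ⊆ Zᶜ := by
      intro a ha
      rw [Finset.mem_compl]
      exact (Finset.mem_sdiff.mp ha).2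
    obtain ⟨e, he⟩ := NodalGraph.exists_boundary hZcc hBsub hBne
        ⟨o, Finset.mem_compl.mpr ho.1, fun h => ho.2 (Finset.mem_sdiff.mp h).1⟩
    refine ⟨e, ?_⟩
    rw [NodalGraph.mem_tset]
    simp only [Finset.mem_sdiff, Finset.mem_compl, Finset.mem_union] at he ⊢
    tauto
  -- disjointness facts needed for counting
  have hSnAO : S ∉ G.tset (Z \ Z') (Z ∪ Z')ᶜ := by
    intro h
    rw [NodalGraph.mem_tset] at h hS
    simp only [Finset.mem_sdiff, Finset.mem_compl, Finset.mem_union] at h hS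
    tauto
  have hSnBO : S ∉ G.tset (Z' \ Z) (Z ∪ Z')ᶜ := by
    intro h
    rw [NodalGraph.mem_tset] at h hS
    simp only [Finset.mem_sdiff, Finset.mem_compl, Finset.mem_union] at h hS
    tauto
  have hSnIB : S ∉ G.tset (Z ∩ Z') (Z' \ Z) := by
    intro h
    rw [NodalGraph.mem_tset] at h hS
    simp only [Finset.mem_inter, Finset.mem_sdiff] at h hS
    tauto
  have hSnIA : S ∉ G.tset (Z ∩ Z') (Z \ Z') := by
    intro h
    rw [NodalGraph.mem_tset] at h hS
    simp only [Finset.mem_inter, Finset.mem_sdiff] at h hS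
    tauto
  have dIB_AO : Disjoint (G.tset (Z ∩ Z') (Z' \ Z)) (G.tset (Z \ Z') (Z ∪ Z')ᶜ) := by
    rw [Finset.disjoint_left]
    intro e h1 h2
    rw [NodalGraph.mem_tset] at h1 h2
    simp only [Finset.mem_inter, Finset.mem_sdiff, Finset.mem_compl,
      Finset.mem_union] at h1 h2
    tauto
  have dIA_BO : Disjoint (G.tset (Z ∩ Z') (Z \ Z')) (G.tset (Z' \ Z) (Z ∪ Z')ᶜ) := by
    rw [Finset.disjoint_left]
    intro e h1 h2
    rw [NodalGraph.mem_tset] at h1 h2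
    simp only [Finset.mem_inter, Finset.mem_sdiff, Finset.mem_compl,
      Finset.mem_union] at h1 h2
    tauto
  -- counting: each boundary class is a singleton
  have hcardZ : (G.tset (Z ∩ Z') (Z' \ Z)).card + (G.tset (Z \ Z') (Z ∪ Z')ᶜ).card = 2 := by
    have h3 : (G.Term Z).card = 3 := hkZ
    rw [hTermZ, htIO, htAB, Finset.union_empty] at h3
    rw [Finset.card_union_of_disjoint, Finset.card_union_of_disjoint,
      Finset.card_singleton] at h3
    · omega
    · exact Finset.disjoint_singleton_right.mpr hSnIB
    · rw [Finset.disjoint_union_left]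
      exact ⟨dIB_AO, Finset.disjoint_singleton_left.mpr hSnAO⟩
  have hcardZ' : (G.tset (Z ∩ Z') (Z \ Z')).card + (G.tset (Z' \ Z) (Z ∪ Z')ᶜ).card = 2 := by
    have h3 : (G.Term Z').card = 3 := hkZ'
    rw [hTermZ', htIO, htAB, Finset.union_empty] at h3
    rw [Finset.card_union_of_disjoint, Finset.card_union_of_disjoint,
      Finset.card_singleton] at h3
    · omega
    · exact Finset.disjoint_singleton_right.mpr hSnIA
    · rw [Finset.disjoint_union_left]
      exact ⟨dIA_BO, Finset.disjoint_singleton_left.mpr hSnBO⟩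
  have hIB1 : (G.tset (Z ∩ Z') (Z' \ Z)).card = 1 := by
    have h1 := Finset.Nonempty.card_pos htIBne
    have h2 := Finset.Nonempty.card_pos htAOne
    omega
  have hAO1 : (G.tset (Z \ Z') (Z ∪ Z')ᶜ).card = 1 := by
    have h1 := Finset.Nonempty.card_pos htIBne
    omega
  have hIA1 : (G.tset (Z ∩ Z') (Z \ Z')).card = 1 := by
    have h1 := Finset.Nonempty.card_pos htIAne
    have h2 := Finset.Nonempty.card_pos htBOne
    omega
  have hBO1 : (G.tset (Z' \ Z) (Z ∪ Z')ᶜ).card = 1 := by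
    have h1 := Finset.Nonempty.card_pos htIAne
    omega
  obtain ⟨eIB, heIB⟩ := Finset.card_eq_one.mp hIB1
  obtain ⟨eAO, heAO⟩ := Finset.card_eq_one.mp hAO1
  obtain ⟨eIA, heIA⟩ := Finset.card_eq_one.mp hIA1
  obtain ⟨eBO, heBO⟩ := Finset.card_eq_one.mp hBO1
  have heIBm : eIB ∈ G.tset (Z ∩ Z') (Z' \ Z) := heIB ▸ Finset.mem_singleton_self eIB
  have heAOm : eAO ∈ G.tset (Z \ Z') (Z ∪ Z')ᶜ := heAO ▸ Finset.mem_singleton_self eAO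
  have heIAm : eIA ∈ G.tset (Z ∩ Z') (Z \ Z') := heIA ▸ Finset.mem_singleton_self eIA
  have heBOm : eBO ∈ G.tset (Z' \ Z) (Z ∪ Z')ᶜ := heBO ▸ Finset.mem_singleton_self eBO
  -- pairwise distinctness of the four nodes and S
  have hne_AO_BO : eAO ≠ eBO := by
    intro h
    rw [h] at heAOm
    rw [NodalGraph.mem_tset] at heAOm heBOm
    simp only [Finset.mem_sdiff, Finset.mem_compl, Finset.mem_union] at heAOm heBOm
    tauto
  have hne_IA_IB : eIA ≠ eIB := by
    intro h
    rw [h] at heIAm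
    rw [NodalGraph.mem_tset] at heIAm heIBm
    simp only [Finset.mem_inter, Finset.mem_sdiff] at heIAm heIBm
    tauto
  have hne_AO_S : eAO ≠ S := fun h => hSnAO (h ▸ heAOm)
  have hne_BO_S : eBO ≠ S := fun h => hSnBO (h ▸ heBOm)
  have hne_IA_S : eIA ≠ S := fun h => hSnIA (h ▸ heIAm)
  have hne_IB_S : eIB ≠ S := fun h => hSnIB (h ▸ heIBm)
  have hne_AO_IA : eAO ≠ eIA := by
    intro h
    rw [h] at heAOm
    rw [NodalGraph.mem_tset] at heAOm heIAm
    simp only [Finset.mem_inter, Finset.mem_sdiff, Finset.mem_compl,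
      Finset.mem_union] at heAOm heIAm
    tauto
  have hne_AO_IB : eAO ≠ eIB := by
    intro h
    rw [h] at heAOm
    rw [NodalGraph.mem_tset] at heAOm heIBm
    simp only [Finset.mem_inter, Finset.mem_sdiff, Finset.mem_compl,
      Finset.mem_union] at heAOm heIBm
    tauto
  have hne_BO_IA : eBO ≠ eIA := by
    intro h
    rw [h] at heBOm
    rw [NodalGraph.mem_tset] at heBOm heIAm
    simp only [Finset.mem_inter, Finset.mem_sdiff, Finset.mem_compl,
      Finset.mem_union] at heBOm heIAm
    tauto
  have hne_BO_IB : eBO ≠ eIB := by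
    intro h
    rw [h] at heBOm
    rw [NodalGraph.mem_tset] at heBOm heIBm
    simp only [Finset.mem_inter, Finset.mem_sdiff, Finset.mem_compl,
      Finset.mem_union] at heBOm heIBm
    tauto
  -- explicit descriptions of all Term sets
  have hTZ3 : G.Term Z = {eIB, S, eAO} := by
    rw [hTermZ, htIO, htAB, heIB, heAO, Finset.union_empty]
    ext e
    simp only [Finset.mem_union, Finset.mem_singleton, Finset.mem_insert]
    exact or_assoc
  have hTZ'3 : G.Term Z' = {eIA, S, eBO} := by
    rw [hTermZ', htIO, htAB, heIA, heBO, Finset.union_empty]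
    ext e
    simp only [Finset.mem_union, Finset.mem_singleton, Finset.mem_insert]
    exact or_assoc
  have hTU2 : G.Term (Z ∪ Z') = {eAO, eBO} := by
    rw [hTermU, htIO, heAO, heBO, Finset.empty_union]
    ext e
    simp only [Finset.mem_union, Finset.mem_singleton, Finset.mem_insert]
  have hTI2 : G.Term (Z ∩ Z') = {eIA, eIB} := by
    rw [hTermI, htIO, heIA, heIB, Finset.union_empty]
    ext e
    simp only [Finset.mem_union, Finset.mem_singleton, Finset.mem_insert]
  -- the tail structure of `Z ∪ Z'`
  have hUconn : G.ConnSub (Z ∪ Z') := NodalGraph.connSub_union hZc hZ'c hIne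
  have hUcompl : G.ConnSub (Z ∪ Z')ᶜ := by
    refine NodalGraph.connSub_of_unique_boundary hZcc ?_ hOne eBO ?_
    · exact Finset.compl_subset_compl.mpr Finset.subset_union_left
    · intro e he
      have h : e ∈ G.tset (Z' \ Z) (Z ∪ Z')ᶜ := by
        rw [NodalGraph.mem_tset]
        simp only [Finset.mem_sdiff, Finset.mem_compl, Finset.mem_union] at he ⊢
        tauto
      rw [heBO, Finset.mem_singleton] at h
      exact h
  have hIconn : G.ConnSub (Z ∩ Z') := by
    refine NodalGraph.connSub_of_unique_boundary hZ'c Finset.inter_subset_right hIne eIB ?_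
    intro e he
    have h : e ∈ G.tset (Z ∩ Z') (Z' \ Z) := by
      rw [NodalGraph.mem_tset]
      simp only [Finset.mem_inter, Finset.mem_sdiff] at he ⊢
      tauto
    rw [heIB, Finset.mem_singleton] at h
    exact h
  have hIcompl : G.ConnSub (Z ∩ Z')ᶜ := by
    rw [Finset.compl_inter]
    refine NodalGraph.connSub_union hZcc hZ'cc ?_
    rw [← Finset.compl_union]
    exact hOne
  obtain ⟨o, ho⟩ := hOne
  obtain ⟨a, ha⟩ := hAne
  rw [Finset.mem_sdiff] at ha
  refine ⟨⟨⟨?_, hUconn, hUcompl⟩, ?_⟩, ⟨⟨?_, hIconn, hIcompl⟩, ?_⟩, ?_, ?_, ?_⟩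
  · intro h
    rw [h, Finset.compl_univ] at ho
    exact absurd ho (Finset.notMem_empty o)
  · show (G.Term (Z ∪ Z')).card = 2
    rw [hTU2]
    exact Finset.card_pair hne_AO_BO
  · intro h
    have : a ∈ Z ∩ Z' := h ▸ Finset.mem_univ a
    rw [Finset.mem_inter] at this
    exact ha.2 this.2
  · show (G.Term (Z ∩ Z')).card = 2
    rw [hTI2]
    exact Finset.card_pair hne_IA_IB
  · rw [hTU2, hTI2, hTZ3, hTZ'3]
    ext e
    simp only [Finset.mem_insert, Finset.mem_singleton, Finset.mem_sdiff,
      Finset.mem_union]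
    constructor
    · rintro (rfl | rfl)
      · exact ⟨Or.inl (Or.inr (Or.inr rfl)),
          fun h => by rcases h with h | h | h <;>
            [exact hne_AO_S h; exact hne_AO_IA h; exact hne_AO_IB h]⟩
      · exact ⟨Or.inr (Or.inr (Or.inr rfl)),
          fun h => by rcases h with h | h | h <;>
            [exact hne_BO_S h; exact hne_BO_IA h; exact hne_BO_IB h]⟩
    · rintro ⟨h1, h2⟩
      push_neg at h2
      rcases h1 with (h | h | h) | (h | h | h)
      · exact absurd h h2.2.2
      · exact absurd h h2.1
      · exact Or.inl h
      · exact absurd h h2.2.1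
      · exact absurd h h2.1
      · exact Or.inr h
  · refine ⟨eAO, ?_, eBO, ?_, hne_AO_BO, hTU2⟩
    · rw [hTZ3]; simp
    · rw [hTZ'3]; simp
  · refine ⟨eIB, ?_, eIA, ?_, hne_IA_IB.symm, ?_⟩
    · rw [hTZ3]; simp
    · rw [hTZ'3]; simp
    · rw [hTI2, Finset.pair_comm]
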